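/- Let g ∈ S^30. The function h = max{0, g} (the composition of g with the ReLU function) is H-conforming, i.e., h ∈ S^30, if and only if there is no pair of sets ∅ ⊊ S ⊊ S' ⊊ [4]_0 such that g(r_S) and g(r_{S'}) are both nonzero and have different signs. -/

import Mathlib

open Finset

/-- Extend `x ∈ ℝ⁴` by the coordinate `x₀ = 0`, giving a vector indexed by `[4]₀ = {0,…,4}`. -/
noncomputable def ext (x : Fin 4 → ℝ) : Fin 5 → ℝ := Fin.cases 0 x

/-- The cell `C_π = {x ∈ ℝ⁴ : x_{π(0)} ≤ x_{π(1)} ≤ x_{π(2)} ≤ x_{π(3)} ≤ x_{π(4)}}` of the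
hyperplane arrangement `H` (with the convention `x₀ = 0`). -/
def cell (π : Equiv.Perm (Fin 5)) : Set (Fin 4 → ℝ) :=
  {x | ∀ i : Fin 4, ext x (π i.castSucc) ≤ ext x (π i.succ)}

/-- `g : ℝ⁴ → ℝ` is `H`-conforming: it is a positively homogeneous continuous function that
is linear on each cell `C_π` of the arrangement `H` (hence continuous piecewise linear). -/
def Hconforming (g : (Fin 4 → ℝ) → ℝ) : Prop :=
  Continuous g ∧ (∀ (lam : ℝ), 0 ≤ lam → ∀ x, g (lam • x) = lam * g x) ∧
    ∀ π : Equiv.Perm (Fin 5), ∃ a : Fin 4 → ℝ, ∀ x ∈ cell π, g x = ∑ j, a j * x j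

/-- The generator `r_S` of the ray `R_S`, for `∅ ⊊ S ⊊ [4]₀`: the 0/1 indicator vector of
the complement of `S` if `0 ∈ S`, and the 0/(−1) indicator vector of `S` if `0 ∉ S`. -/
noncomputable def ray (S : Finset (Fin 5)) : Fin 4 → ℝ := fun j =>
  if (0 : Fin 5) ∈ S then (if j.succ ∈ S then 0 else 1) else (if j.succ ∈ S then -1 else 0)

lemma ext_zero (x : Fin 4 → ℝ) : ext x 0 = 0 := rfl

lemma ext_succ (x : Fin 4 → ℝ) (j : Fin 4) : ext x j.succ = x j := by simp [_root_.ext]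

lemma ext_ray (S : Finset (Fin 5)) (m : Fin 5) :
    ext (ray S) m = (if m ∈ S then 0 else 1) - (if (0 : Fin 5) ∈ S then 0 else 1) := by
  induction m using Fin.cases with
  | zero => rw [ext_zero]; split_ifs <;> simp_all
  | succ j => rw [ext_succ]; unfold ray; split_ifs <;> simp_all <;> ring

lemma mem_cell_of_monotone {π : Equiv.Perm (Fin 5)} {x : Fin 4 → ℝ}
    (h : Monotone fun i => ext x (π i)) : x ∈ cell π :=
  fun i => h (Fin.castSucc_lt_succ : i.castSucc < i.succ).le

def Sset (π : Equiv.Perm (Fin 5)) (k : Fin 4) : Finset (Fin 5) :=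
  (Finset.univ.filter (fun i => i ≤ k.castSucc)).image π

lemma mem_Sset {π : Equiv.Perm (Fin 5)} {k : Fin 4} {m : Fin 5} :
    m ∈ Sset π k ↔ π.symm m ≤ k.castSucc := by
  simp only [Sset, Finset.mem_image, Finset.mem_filter, Finset.mem_univ, true_and]
  constructor
  · rintro ⟨i, hi, rfl⟩; simpa using hi
  · intro h; exact ⟨π.symm m, h, by simp⟩

lemma telescope (F : Fin 5 → ℝ) (i : Fin 5) :
    ∑ k : Fin 4, (if k.castSucc < i then F k.succ - F k.castSucc else 0) = F i - F 0 := by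
  fin_cases i <;>
    simp only [Fin.sum_univ_four, Fin.lt_def, Fin.coe_castSucc, Fin.val_succ,
      show ((0:Fin 4):ℕ) = 0 from rfl, show ((1:Fin 4):ℕ) = 1 from rfl,
      show ((2:Fin 4):ℕ) = 2 from rfl, show ((3:Fin 4):ℕ) = 3 from rfl,
      show Fin.succ (2:Fin 4) = 3 from rfl, show Fin.castSucc (2:Fin 4) = 2 from rfl,
      show Fin.succ (3:Fin 4) = 4 from rfl, show Fin.castSucc (3:Fin 4) = 3 from rfl,
      show (⟨2, by omega⟩ : Fin 5) = 2 from rfl, show (⟨3, by omega⟩ : Fin 5) = 3 from rfl,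
      show (⟨4, by omega⟩ : Fin 5) = 4 from rfl,
      show ((3:Fin 5):ℕ) = 3 from rfl, show ((4:Fin 5):ℕ) = 4 from rfl] <;>
    norm_num <;> ring

lemma decomp (π : Equiv.Perm (Fin 5)) (x : Fin 4 → ℝ) (j : Fin 4) :
    x j = ∑ k : Fin 4, (ext x (π k.succ) - ext x (π k.castSucc)) * ray (Sset π k) j := by
  have key : ∀ k : Fin 4, (ext x (π k.succ) - ext x (π k.castSucc)) * ray (Sset π k) j
      = (if k.castSucc < π.symm j.succ then ext x (π k.succ) - ext x (π k.castSucc) else 0)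
        - (if k.castSucc < π.symm 0 then ext x (π k.succ) - ext x (π k.castSucc) else 0) := by
    intro k
    rw [← ext_succ (ray (Sset π k)) j, ext_ray]
    simp only [mem_Sset, ← not_lt]
    split_ifs <;> ring
  simp only [key, Finset.sum_sub_distrib]
  rw [telescope (fun i => ext x (π i)), telescope (fun i => ext x (π i))]
  simp [ext_succ, ext_zero]

lemma dot_decomp (π : Equiv.Perm (Fin 5)) (x : Fin 4 → ℝ) (a : Fin 4 → ℝ) :
    ∑ j, a j * x j =
      ∑ k : Fin 4, (ext x (π k.succ) - ext x (π k.castSucc)) *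
        ∑ j, a j * ray (Sset π k) j := by
  calc ∑ j, a j * x j
      = ∑ j, ∑ k : Fin 4, (ext x (π k.succ) - ext x (π k.castSucc)) * (a j * ray (Sset π k) j) := by
        refine Finset.sum_congr rfl fun j _ => ?_
        rw [decomp π x j, Finset.mul_sum]
        exact Finset.sum_congr rfl fun k _ => by ring
    _ = _ := by
        rw [Finset.sum_comm]
        exact Finset.sum_congr rfl fun k _ => by rw [Finset.mul_sum]

lemma ray_Sset_mem_cell (π : Equiv.Perm (Fin 5)) (k : Fin 4) : ray (Sset π k) ∈ cell π := by
  intro i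
  rw [ext_ray, ext_ray]
  simp only [mem_Sset, Equiv.symm_apply_apply]
  have hle : i.castSucc ≤ i.succ := (Fin.castSucc_lt_succ : i.castSucc < i.succ).le
  split_ifs with h1 <;> norm_num
  all_goals exact absurd (hle.trans (by assumption)) h1

lemma Sset_nonempty (π : Equiv.Perm (Fin 5)) (k : Fin 4) : (Sset π k).Nonempty :=
  ⟨π 0, mem_Sset.2 (by simp [Fin.zero_le])⟩

lemma Sset_ssubset (π : Equiv.Perm (Fin 5)) {k k' : Fin 4} (h : k < k') :
    Sset π k ⊂ Sset π k' := by
  constructor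
  · intro m hm
    rw [mem_Sset] at hm ⊢
    exact hm.trans (Fin.castSucc_le_castSucc_iff.2 h.le)
  · intro hsup
    have hmem : π k'.castSucc ∈ Sset π k' := mem_Sset.2 (by simp)
    have := mem_Sset.1 (hsup hmem)
    simp only [Equiv.symm_apply_apply, Fin.castSucc_le_castSucc_iff] at this
    exact absurd this (not_le.2 h)

lemma Sset_ssubset_univ (π : Equiv.Perm (Fin 5)) (k : Fin 4) :
    Sset π k ⊂ Finset.univ := by
  refine Finset.ssubset_univ_iff.2 fun hall => ?_
  have := mem_Sset.1 (hall ▸ Finset.mem_univ (π 4))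
  simp only [Equiv.symm_apply_apply, Fin.le_def, Fin.coe_castSucc] at this
  omega

lemma ext_lincomb (x y : Fin 4 → ℝ) (c : ℝ) (m : Fin 5) :
    ext (fun j => x j + c * y j) m = ext x m + c * ext y m := by
  induction m using Fin.cases with
  | zero => simp [ext_zero]
  | succ j => simp [ext_succ]

lemma sum_add_smul (c : ℝ) (a u v : Fin 4 → ℝ) :
    ∑ j, a j * (u j + c * v j) = (∑ j, a j * u j) + c * ∑ j, a j * v j := by
  rw [Finset.mul_sum, ← Finset.sum_add_distrib]
  exact Finset.sum_congr rfl fun j _ => by ring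

lemma no_lin (g : (Fin 4 → ℝ) → ℝ) (π : Equiv.Perm (Fin 5)) (a b : Fin 4 → ℝ)
    (ha : ∀ x ∈ cell π, g x = ∑ j, a j * x j)
    (hb : ∀ x ∈ cell π, max 0 (g x) = ∑ j, b j * x j)
    (u v : Fin 4 → ℝ) (hu : u ∈ cell π) (hv : v ∈ cell π)
    (hz : ∀ t : ℝ, 0 ≤ t → (fun j => u j + t * v j) ∈ cell π)
    (hgu : 0 < g u) (hgv : g v < 0) : False := by
  set t := g u / (-g v) with ht
  have hvne : g v ≠ 0 := ne_of_lt hgv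
  have ht0 : 0 ≤ t := div_nonneg hgu.le (by linarith)
  have hzm := hz t ht0
  have hgz : g (fun j => u j + t * v j) = 0 := by
    rw [ha _ hzm, sum_add_smul, ← ha _ hu, ← ha _ hv, ht]
    rw [div_mul_eq_mul_div, mul_div_assoc, div_neg, div_self hvne]
    ring
  have h1 := hb _ hzm
  rw [hgz, sum_add_smul, ← hb _ hu, ← hb _ hv, max_eq_right hgu.le,
    max_eq_left hgv.le, mul_zero, add_zero, max_self] at h1
  linarith

/-- for `g ∈ S³⁰`, the function `h = max{0, g}` is `H`-conforming (i.e.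
`h ∈ S³⁰`) if and only if there is no pair of sets `∅ ⊊ S ⊊ S' ⊊ [4]₀` such that `g(r_S)`
and `g(r_{S'})` are both nonzero and have different signs. -/
theorem relu_conforming_iff (g : (Fin 4 → ℝ) → ℝ) (hg : Hconforming g) :
    Hconforming (fun x => max 0 (g x)) ↔
      ¬∃ S S' : Finset (Fin 5), S.Nonempty ∧ S ⊂ S' ∧ S' ⊂ Finset.univ ∧
        g (ray S) * g (ray S') < 0 := by
  constructor
  · rintro ⟨hhc, hhh, hhlin⟩ ⟨S, S', hSne, hSS, hSu, hprod⟩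
    set w : Fin 5 → ℝ := fun m => ext (ray S) m + ext (ray S') m with hwdef
    set π := Tuple.sort w with hπ
    have hw : Monotone (w ∘ π) := Tuple.monotone_sort w
    have hsub : ∀ m, m ∈ S → m ∈ S' := fun m hm => hSS.1 hm
    have hcomp : ∀ m m' : Fin 5, w m ≤ w m' →
        ext (ray S) m ≤ ext (ray S) m' ∧ ext (ray S') m ≤ ext (ray S') m' := by
      intro m m' hmm
      have hs1 := hsub m; have hs2 := hsub m'
      simp only [hwdef, ext_ray] at hmm ⊢
      by_cases h1 : m ∈ S <;> by_cases h2 : m ∈ S' <;> by_cases h3 : m' ∈ S <;>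
        by_cases h4 : m' ∈ S' <;> simp_all <;> first | (constructor <;> linarith) | linarith
    have hu : ray S ∈ cell π := mem_cell_of_monotone fun i i' hii => (hcomp _ _ (hw hii)).1
    have hv : ray S' ∈ cell π := mem_cell_of_monotone fun i i' hii => (hcomp _ _ (hw hii)).2
    have hz1 : ∀ t : ℝ, 0 ≤ t → (fun j => ray S j + t * ray S' j) ∈ cell π := by
      intro t ht
      apply mem_cell_of_monotone
      intro i i' hii
      have h1 := (hcomp _ _ (hw hii)).1
      have h2 := (hcomp _ _ (hw hii)).2
      dsimp only
      rw [ext_lincomb, ext_lincomb]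
      nlinarith
    have hz2 : ∀ t : ℝ, 0 ≤ t → (fun j => ray S' j + t * ray S j) ∈ cell π := by
      intro t ht
      apply mem_cell_of_monotone
      intro i i' hii
      have h1 := (hcomp _ _ (hw hii)).1
      have h2 := (hcomp _ _ (hw hii)).2
      dsimp only
      rw [ext_lincomb, ext_lincomb]
      nlinarith
    obtain ⟨a, ha⟩ := hg.2.2 π
    obtain ⟨b, hb⟩ := hhlin π
    rcases mul_neg_iff.1 hprod with ⟨h1, h2⟩ | ⟨h1, h2⟩
    · exact no_lin g π a b ha hb _ _ hu hv hz1 h1 h2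
    · exact no_lin g π a b ha hb _ _ hv hu hz2 h2 h1
  · intro hno
    refine ⟨continuous_const.max hg.1, ?_, ?_⟩
    · intro lam hlam x
      simp only
      rw [hg.2.1 lam hlam x, mul_max_of_nonneg _ _ hlam, mul_zero]
    · intro π
      obtain ⟨a, ha⟩ := hg.2.2 π
      have hsign : (∀ k : Fin 4, 0 ≤ g (ray (Sset π k))) ∨
          (∀ k : Fin 4, g (ray (Sset π k)) ≤ 0) := by
        by_contra hcon
        push_neg at hcon
        obtain ⟨⟨k1, hk1⟩, ⟨k2, hk2⟩⟩ := hcon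
        apply hno
        rcases lt_trichotomy k1 k2 with h | h | h
        · exact ⟨Sset π k1, Sset π k2, Sset_nonempty π k1, Sset_ssubset π h,
            Sset_ssubset_univ π k2, mul_neg_of_neg_of_pos hk1 hk2⟩
        · rw [h] at hk1; linarith
        · exact ⟨Sset π k2, Sset π k1, Sset_nonempty π k2, Sset_ssubset π h,
            Sset_ssubset_univ π k1, mul_neg_of_pos_of_neg hk2 hk1⟩
      rcases hsign with hpos | hneg
      · refine ⟨a, fun x hx => ?_⟩
        have hgx : g x = ∑ j, a j * x j := ha x hx
        have h0 : 0 ≤ g x := by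
          rw [hgx, dot_decomp π x a]
          refine Finset.sum_nonneg fun k _ => mul_nonneg (sub_nonneg.2 (hx k)) ?_
          rw [← ha _ (ray_Sset_mem_cell π k)]
          exact hpos k
        simp only
        rw [max_eq_right h0, hgx]
      · refine ⟨0, fun x hx => ?_⟩
        have h0 : g x ≤ 0 := by
          rw [ha x hx, dot_decomp π x a]
          refine Finset.sum_nonpos fun k _ => mul_nonpos_iff.2 (Or.inl ⟨sub_nonneg.2 (hx k), ?_⟩)
          rw [← ha _ (ray_Sset_mem_cell π k)]
          exact hneg k
        simp only [Pi.zero_apply, zero_mul, Finset.sum_const_zero]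
        exact max_eq_left h0
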